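/- Let q < 0, μ > 0, p > 0, and -½q² < E < 0. Define Q(x) = ((p+2)|E|/(2μ))^{1/p} · sinh^{-2/p}( p√(|E|/2)|x| + arctanh(√(2|E|)/|q|) ). Then Q satisfies -½Q''(x) + μ Q(x)^{p+1} = E Q(x) for all x > 0, and Q'(0+) = q Q(0). -/

import Mathlib

/-- Inverse hyperbolic tangent. -/
noncomputable def arctanh (x : ℝ) : ℝ := (1/2) * Real.log ((1 + x) / (1 - x))

lemma arctanh_pos {t : ℝ} (h0 : 0 < t) (h1 : t < 1) : 0 < arctanh t := by
  have h : 1 < (1 + t) / (1 - t) := by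
    rw [lt_div_iff₀ (by linarith)]; linarith
  have hl := Real.log_pos h
  unfold arctanh; linarith

lemma sinh_arctanh {t : ℝ} (h0 : 0 < t) (h1 : t < 1) :
    Real.sinh (arctanh t) = t * Real.cosh (arctanh t) := by
  have hu : (0:ℝ) < (1 + t) / (1 - t) := by
    apply div_pos <;> linarith
  have hsum : arctanh t + arctanh t = Real.log ((1 + t) / (1 - t)) := by
    unfold arctanh; ring
  have he2 : Real.exp (arctanh t) * Real.exp (arctanh t) = (1 + t) / (1 - t) := by
    rw [← Real.exp_add, hsum, Real.exp_log hu]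
  set e := Real.exp (arctanh t) with hee
  have hepos : 0 < e := Real.exp_pos _
  rw [Real.sinh_eq, Real.cosh_eq, Real.exp_neg, ← hee]
  have h1t : (1:ℝ) - t ≠ 0 := by linarith
  field_simp
  field_simp at he2
  nlinarith [he2]

set_option maxHeartbeats 1000000 in
/-- The explicit defocusing (`μ > 0`) nonlinear bound state
`Q(x) = ((p+2)|E|/(2μ))^{1/p} sinh^{-2/p}(p√(|E|/2)|x| + arctanh(√(2|E|)/|q|))`
solves `-½Q'' + μ Q^{p+1} = EQ` for `x > 0` and satisfies `Q'(0+) = q Q(0)`. -/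
theorem defocusing_bound_state (q μ p E : ℝ) (hq : q < 0) (hμ : 0 < μ) (hp : 0 < p)
    (hE₁ : -(1/2) * q^2 < E) (hE₂ : E < 0)
    (Q : ℝ → ℝ)
    (hQ : ∀ x, Q x = ((p + 2) * |E| / (2 * μ)) ^ (1/p) *
      (Real.sinh (p * Real.sqrt (|E| / 2) * |x| + arctanh (Real.sqrt (2 * |E|) / |q|)))
        ^ (-(2/p))) :
    (∀ x : ℝ, 0 < x → -(1/2) * deriv (deriv Q) x + μ * Q x ^ (p + 1) = E * Q x) ∧
    HasDerivWithinAt Q (q * Q 0) (Set.Ici 0) 0 := by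
  have hE : |E| = -E := abs_of_neg hE₂
  have hEpos : 0 < |E| := by rw [hE]; linarith
  have hqabs : |q| = -q := abs_of_neg hq
  have hqpos : 0 < |q| := by rw [hqabs]; linarith
  set k := Real.sqrt (|E| / 2) with hk
  have hkpos : 0 < k := Real.sqrt_pos.mpr (by positivity)
  have hk2 : k * k = |E| / 2 := Real.mul_self_sqrt (by positivity)
  have hkk : k * k = -E / 2 := by rw [hk2, hE]
  set a := p * k with ha
  have hapos : 0 < a := mul_pos hp hkpos
  set t := Real.sqrt (2 * |E|) / |q| with ht
  have ht0 : 0 < t := div_pos (Real.sqrt_pos.mpr (by positivity)) hqpos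
  have h2k : 2 * k = Real.sqrt (2 * |E|) := by
    rw [show 2 * |E| = (2 * k) ^ 2 by nlinarith, Real.sqrt_sq (by positivity)]
  have ht1 : t < 1 := by
    rw [ht, div_lt_one hqpos, ← h2k]
    nlinarith [hk2]
  set b := arctanh t with hb
  have hbpos : 0 < b := arctanh_pos ht0 ht1
  set r := -(2 / p) with hr
  have hpr : r * p = -2 := by rw [hr]; field_simp
  set K := ((p + 2) * |E| / (2 * μ)) ^ ((1:ℝ)/p) with hK
  have hKpos : 0 < K := Real.rpow_pos_of_pos (by positivity) _
  have hKp : K ^ p = (p + 2) * |E| / (2 * μ) := by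
    rw [hK, ← Real.rpow_mul (by positivity), one_div_mul_cancel (ne_of_gt hp), Real.rpow_one]
  -- the smooth extension
  set g : ℝ → ℝ := fun y => K * Real.sinh (a * y + b) ^ r with hg
  have hsinh : ∀ y : ℝ, HasDerivAt (fun z => Real.sinh (a * z + b))
      (Real.cosh (a * y + b) * a) y := by
    intro y
    have h1 : HasDerivAt (fun z : ℝ => a * z + b) a y := by
      simpa using ((hasDerivAt_id y).const_mul a).add_const b
    exact (Real.hasDerivAt_sinh _).comp y h1
  have hcosh : ∀ y : ℝ, HasDerivAt (fun z => Real.cosh (a * z + b))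
      (Real.sinh (a * y + b) * a) y := by
    intro y
    have h1 : HasDerivAt (fun z : ℝ => a * z + b) a y := by
      simpa using ((hasDerivAt_id y).const_mul a).add_const b
    exact (Real.hasDerivAt_cosh _).comp y h1
  have hspos : ∀ y : ℝ, 0 < a * y + b → 0 < Real.sinh (a * y + b) :=
    fun y hy => Real.sinh_pos_iff.mpr hy
  have hpow : ∀ s : ℝ, ∀ y : ℝ, 0 < a * y + b →
      HasDerivAt (fun z => Real.sinh (a * z + b) ^ s)
        (s * Real.sinh (a * y + b) ^ (s - 1) * (Real.cosh (a * y + b) * a)) y := by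
    intro s y hy
    exact (Real.hasDerivAt_rpow_const (Or.inl (ne_of_gt (hspos y hy)))).comp y (hsinh y)
  have hg1 : ∀ y : ℝ, 0 < a * y + b →
      HasDerivAt g (K * (r * Real.sinh (a * y + b) ^ (r - 1) * (Real.cosh (a * y + b) * a))) y :=
    fun y hy => (hpow r y hy).const_mul K
  set g1 : ℝ → ℝ := fun y => (K * r * a) *
    (Real.sinh (a * y + b) ^ (r - 1) * Real.cosh (a * y + b)) with hg1def
  have hU : IsOpen {y : ℝ | 0 < a * y + b} :=
    isOpen_lt continuous_const (by continuity)
  have hxU : ∀ {y : ℝ}, 0 ≤ y → 0 < a * y + b := fun {y} hy => by nlinarith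
  constructor
  · intro x hx
    have hmemU : {y : ℝ | 0 < a * y + b} ∈ nhds x := hU.mem_nhds (hxU hx.le)
    have hQg : Q =ᶠ[nhds x] g := by
      filter_upwards [Ioi_mem_nhds hx] with y hy
      rw [hQ, hg, abs_of_pos hy]
    have hdgEq : Set.EqOn (deriv g) g1 {y : ℝ | 0 < a * y + b} := by
      intro y hy
      rw [(hg1 y hy).deriv, hg1def]; ring
    have hQ'g1 : deriv Q =ᶠ[nhds x] g1 :=
      hQg.deriv.trans (Filter.eventuallyEq_of_mem hmemU hdgEq)
    have hxb : 0 < a * x + b := hxU hx.le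
    set S := Real.sinh (a * x + b) with hS
    set C := Real.cosh (a * x + b) with hC
    have hSpos : 0 < S := hspos x hxb
    have hprod : HasDerivAt
        (fun y => Real.sinh (a * y + b) ^ (r - 1) * Real.cosh (a * y + b))
        (((r - 1) * S ^ (r - 1 - 1) * (C * a)) * C + S ^ (r - 1) * (S * a)) x :=
      (hpow (r - 1) x hxb).mul (hcosh x)
    have hg1' : HasDerivAt g1
        ((K * r * a) * (((r - 1) * S ^ (r - 1 - 1) * (C * a)) * C + S ^ (r - 1) * (S * a))) x :=
      hprod.const_mul _
    have hQ'' : deriv (deriv Q) x =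
        (K * r * a) * (((r - 1) * S ^ (r - 1 - 1) * (C * a)) * C + S ^ (r - 1) * (S * a)) := by
      rw [hQ'g1.deriv_eq, hg1'.deriv]
    have hcc : C ^ 2 = S ^ 2 + 1 := Real.cosh_sq (a * x + b)
    have e3 : S ^ (r - 1 - 1) * S = S ^ (r - 1) := by
      rw [← Real.rpow_add_one (ne_of_gt hSpos)]; ring_nf
    have e1 : S ^ (r - 1) * S = S ^ r := by
      rw [← Real.rpow_add_one (ne_of_gt hSpos)]; ring_nf
    have hQx : Q x = K * S ^ r := by rw [hQ, abs_of_pos hx, hS]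
    have hexp : r * (p + 1) = r - 1 - 1 := by
      rw [hr]; field_simp; ring
    have hQp : μ * Q x ^ (p + 1) = (p + 2) * (-E) / 2 * K * S ^ (r - 1 - 1) := by
      rw [hQx, Real.mul_rpow hKpos.le (Real.rpow_pos_of_pos hSpos r).le,
        ← Real.rpow_mul hSpos.le, hexp, Real.rpow_add hKpos, Real.rpow_one, hKp, hE]
      field_simp
    have hD : ((r - 1) * S ^ (r - 1 - 1) * (C * a)) * C + S ^ (r - 1) * (S * a) =
        a * ((r - 1) * S ^ (r - 1 - 1) + r * S ^ r) := by
      linear_combination (a * (r - 1) * S ^ (r - 1 - 1)) * hcc +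
        (a * (r - 1) * S) * e3 + (a * r) * e1
    rw [hQ'', hQp, hQx, hD, ha]
    linear_combination
      (-(1/2) * K * r * p^2 * ((r - 1) * S ^ (r - 1 - 1) + r * S ^ r)) * hkk +
      ((E/4) * K * ((r*p - 2 - p) * S ^ (r - 1 - 1) + (r*p - 2) * S ^ r)) * hpr
  · -- boundary condition
    have hb0 : 0 < a * 0 + b := by simpa using hbpos
    have hg0 : HasDerivAt g
        (K * (r * Real.sinh (a * 0 + b) ^ (r - 1) * (Real.cosh (a * 0 + b) * a))) 0 :=
      hg1 0 hb0
    have hQ0 : Q 0 = K * Real.sinh b ^ r := by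
      rw [hQ]; simp
    have hEqOn : Set.EqOn Q g (Set.Ici 0) := by
      intro y hy
      rw [hQ, hg, abs_of_nonneg hy]
    have hsb : Real.sinh b = t * Real.cosh b := sinh_arctanh ht0 ht1
    have hsbpos : 0 < Real.sinh b := Real.sinh_pos_iff.mpr hbpos
    have e1b : Real.sinh b ^ (r - 1) * Real.sinh b = Real.sinh b ^ r := by
      rw [← Real.rpow_add_one (ne_of_gt hsbpos)]; ring_nf
    have hqt : r * a = q * t := by
      have hq0 : q ≠ 0 := ne_of_lt hq
      have hq0' : -q ≠ 0 := neg_ne_zero.mpr hq0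
      rw [hr, ha, ht, hqabs, ← h2k]
      field_simp
    have hDval : K * (r * Real.sinh (a * 0 + b) ^ (r - 1) * (Real.cosh (a * 0 + b) * a)) =
        q * Q 0 := by
      rw [hQ0]
      have h0b : a * 0 + b = b := by ring
      rw [h0b]
      linear_combination (K * Real.sinh b ^ (r - 1) * Real.cosh b) * hqt +
        (q * K) * e1b + (-(q * K * Real.sinh b ^ (r - 1))) * hsb
    have hfin := (hg0.hasDerivWithinAt (s := Set.Ici 0)).congr hEqOn (hEqOn (by simp))
    rwa [hDval] at hfin
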